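/- Let p be a prime and k a positive integer. Then, in F_p[X,Z], the specialization of φ_{p^k+1} at Y = X satisfies φ_{p^k+1}(X,X,Z) = (p^k+1)·(X−Z)^{p^k−1}. -/
import Mathlib


open MvPolynomial

theorem phi_pow_add_one_specialization
    (p k : ℕ) (hp : p.Prime) (hk : 0 < k)
    (φ : MvPolynomial (Fin 3) (ZMod p))
    (hφ : (X 0 - X 1) * (X 0 - X 2) * φ =
      X 0 ^ (p ^ k + 1) - X 1 ^ (p ^ k + 1) - X 2 ^ (p ^ k + 1) +
        (-X 0 + X 1 + X 2) ^ (p ^ k + 1)) :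
    (aeval ![X 0, X 0, X 1] φ : MvPolynomial (Fin 2) (ZMod p)) =
      ((p ^ k + 1 : ℕ) : MvPolynomial (Fin 2) (ZMod p)) * (X 0 - X 1) ^ (p ^ k - 1) := by
  haveI : Fact p.Prime := ⟨hp⟩
  set q := p ^ k with hq
  have hq1 : 1 ≤ q := Nat.one_le_pow _ _ hp.pos
  obtain ⟨m, hm⟩ : ∃ m, q = m + 1 := ⟨q - 1, (Nat.succ_pred_eq_of_pos hq1).symm⟩
  have hqm : q - 1 = m := by omega
  -- Frobenius facts
  have e01 : ((X 0 - X 1 : MvPolynomial (Fin 3) (ZMod p))) ^ q = X 0 ^ q - X 1 ^ q := by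
    rw [hq]; exact sub_pow_expChar_pow (X 0) (X 1) k
  have e02 : ((X 0 - X 2 : MvPolynomial (Fin 3) (ZMod p))) ^ q = X 0 ^ q - X 2 ^ q := by
    rw [hq]; exact sub_pow_expChar_pow (X 0) (X 2) k
  have efrob : ((-X 0 + X 1 + X 2 : MvPolynomial (Fin 3) (ZMod p))) ^ q = -(X 0 ^ q) + X 1 ^ q + X 2 ^ q := by
    have h : (-X 0 + X 1 + X 2 : MvPolynomial (Fin 3) (ZMod p)) = (X 1 + X 2) - X 0 := by ring
    have hs : ((X 1 + X 2) - X 0 : MvPolynomial (Fin 3) (ZMod p)) ^ p ^ k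
        = (X 1 + X 2) ^ p ^ k - X 0 ^ p ^ k := sub_pow_expChar_pow _ _ _
    have ha : ((X 1 + X 2) : MvPolynomial (Fin 3) (ZMod p)) ^ p ^ k
        = X 1 ^ p ^ k + X 2 ^ p ^ k := add_pow_expChar_pow _ _ p k
    rw [h, hq, hs, ha]; ring
  -- key identity
  have key : (X 0 - X 1) * (X 0 - X 2) * φ =
      (X 0 - X 1) * (X 0 - X 2) * ((X 0 - X 2 : MvPolynomial (Fin 3) (ZMod p)) ^ m + (X 0 - X 1) ^ m) := by
    rw [hφ]
    have h1 : (X 0 : MvPolynomial (Fin 3) (ZMod p)) ^ (q + 1) = X 0 ^ q * X 0 := by rw [pow_succ]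
    have h2 : (X 1 : MvPolynomial (Fin 3) (ZMod p)) ^ (q + 1) = X 1 ^ q * X 1 := by rw [pow_succ]
    have h3 : (X 2 : MvPolynomial (Fin 3) (ZMod p)) ^ (q + 1) = X 2 ^ q * X 2 := by rw [pow_succ]
    have h4 : ((-X 0 + X 1 + X 2 : MvPolynomial (Fin 3) (ZMod p))) ^ (q + 1) =
        (-(X 0 ^ q) + X 1 ^ q + X 2 ^ q) * (-X 0 + X 1 + X 2) := by
      rw [pow_succ, efrob]
    have h5 : ((X 0 - X 2 : MvPolynomial (Fin 3) (ZMod p))) ^ m * (X 0 - X 2) = X 0 ^ q - X 2 ^ q := by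
      rw [← pow_succ, ← hm, e02]
    have h6 : ((X 0 - X 1 : MvPolynomial (Fin 3) (ZMod p))) ^ m * (X 0 - X 1) = X 0 ^ q - X 1 ^ q := by
      rw [← pow_succ, ← hm, e01]
    rw [h1, h2, h3, h4]
    linear_combination (-(X 0 - X 1) : MvPolynomial (Fin 3) (ZMod p)) * h5 - (X 0 - X 2 : MvPolynomial (Fin 3) (ZMod p)) * h6
  have hne : ((X 0 - X 1) * (X 0 - X 2) : MvPolynomial (Fin 3) (ZMod p)) ≠ 0 := by
    apply mul_ne_zero <;> intro h
    · have := congrArg (eval ![1, 0, 0]) h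
      simp at this
    · have := congrArg (eval ![1, 0, 0]) h
      simp at this
  have hφ' : φ = (X 0 - X 2 : MvPolynomial (Fin 3) (ZMod p)) ^ m + (X 0 - X 1) ^ m :=
    mul_left_cancel₀ hne key
  rw [hφ', hqm]
  have hm1 : 1 ≤ m + 1 := le_refl _ |>.trans (by omega)
  have hm0 : m ≠ 0 ∨ True := Or.inr trivial
  have hmpos : 0 < m := by
    have : 2 ≤ q := by
      calc 2 ≤ p := hp.two_le
      _ ≤ p ^ k := Nat.le_self_pow hk.ne' p
    omega
  simp only [map_add, map_pow, map_sub, aeval_X]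
  have : (![X 0, X 0, X 1] : Fin 3 → MvPolynomial (Fin 2) (ZMod p)) 0 = X 0 := rfl
  simp only [Matrix.cons_val_zero, Matrix.cons_val_one, Matrix.head_cons,
    Matrix.cons_val_two, Matrix.tail_cons]
  have hz : ((X 0 - X 0 : MvPolynomial (Fin 2) (ZMod p))) ^ m = 0 := by
    rw [sub_self, zero_pow hmpos.ne']
  rw [hz, add_zero]
  have hc : ((p ^ k + 1 : ℕ) : MvPolynomial (Fin 2) (ZMod p)) = 1 := by
    push_cast
    rw [CharP.cast_eq_zero (MvPolynomial (Fin 2) (ZMod p)) p, zero_pow hk.ne', zero_add]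
  rw [hc, one_mul]
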